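/- Let (X,d,μ) be upper doubling with dominating function λ and constant C_λ, let D be a David–Mattila lattice with parameters C_0, A_0, and let α ≥ 200. Then there is a constant C depending only on C_λ, C_0, A_0, α such that for every cell Q₀ ∈ D_0, every integrable f supported on 30B(Q₀), and every x ∈ Q₀: M_λ f(x) ≤ C·sup over cells Q ∈ D with x ∈ Q of Θ(Q)·A(f,Q), where M_λ f(x) := sup_{R>0} λ(x,R)^{−1}∫_{B(x,R)}|f|dμ, Θ(Q) := μ(αB(Q))/λ(z_Q, α·r(Q)) and A(f,Q) := μ(αB(Q))^{−1}∫_{30B(Q)}|f|dμ. -/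

import Mathlib

open MeasureTheory Metric Set ENNReal

noncomputable section

variable {X : Type*} [MetricSpace X] [MeasurableSpace X] [BorelSpace X]

/-- The support of a measure on a metric space: points all of whose balls have
positive measure. -/
def msupport (μ : Measure X) : Set X := {x | ∀ r : ℝ, 0 < r → 0 < μ (ball x r)}

/-- `(X, d, μ)` is upper doubling with dominating function `lam` and constant `Cl`. -/
structure IsUpperDoubling (μ : Measure X) (lam : X → ℝ → ℝ) (Cl : ℝ) : Prop where
  one_lt : 1 < Cl
  lam_pos : ∀ x r, 0 < r → 0 < lam x r
  lam_mono : ∀ x r₁ r₂, 0 < r₁ → r₁ ≤ r₂ → lam x r₁ ≤ lam x r₂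
  measure_le : ∀ x r, 0 < r → μ (ball x r) ≤ ENNReal.ofReal (lam x r)
  halving : ∀ x r, 0 < r → lam x r ≤ Cl * lam x (r / 2)
  close : ∀ x y r, 0 < r → dist x y ≤ r → lam x r ≤ Cl * lam y r

/-- `(X, d)` is geometrically doubling with constant `C` and doubling dimension `n`:
every `r`-separated subset of a ball of radius `R ≥ r` has cardinality at most `C (R/r)^n`. -/
def GeometricallyDoubling (X : Type*) [MetricSpace X] (C : ℝ) (n : ℕ) : Prop :=
  ∀ (x : X) (R r : ℝ), 0 < r → r ≤ R →
    ∀ S : Finset X, (↑S : Set X) ⊆ ball x R →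
      (∀ a ∈ S, ∀ b ∈ S, a ≠ b → r ≤ dist a b) → (S.card : ℝ) ≤ C * (R / r) ^ n

/-- `ω` is a Dini modulus of continuity. -/
structure IsDiniModulus (ω : ℝ → ℝ) : Prop where
  nonneg : ∀ t, 0 ≤ t → 0 ≤ ω t
  mono : MonotoneOn ω (Set.Ici 0)
  subadd : ∀ s t, 0 ≤ s → 0 ≤ t → ω (s + t) ≤ ω s + ω t
  zero : ω 0 = 0
  pos : ∀ t, 0 < t → 0 < ω t
  summable : Summable (fun j : ℕ => ω ((2 : ℝ) ^ (-(j : ℤ))))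

/-- The Dini norm `∑_{j ≥ 0} ω(2^{-j})`. -/
def diniNorm (ω : ℝ → ℝ) : ℝ := ∑' j : ℕ, ω ((2 : ℝ) ^ (-(j : ℤ)))

/-- `K` is a Calderón–Zygmund kernel with size constant `CK` and modulus of continuity `ω`,
relative to the dominating function `lam`. -/
structure IsCZKernel (lam : X → ℝ → ℝ) (K : X → X → ℂ) (CK : ℝ) (ω : ℝ → ℝ) : Prop where
  size : ∀ x y, x ≠ y → ‖K x y‖ ≤ CK / lam x (dist x y)
  smooth : ∀ x x' y, x ≠ y → dist x x' < dist x y / 2 →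
    ‖K x y - K x' y‖ + ‖K y x - K y x'‖ ≤ ω (dist x x' / dist x y) / lam x (dist x y)

/-- The maximal truncation `T^♯ f(x) = sup_{ε > 0} |∫_{d(x,y) > ε} K(x,y) f(y) dμ(y)|`,
valued in `ℝ≥0∞`. -/
noncomputable def Tsharp (μ : Measure X) (K : X → X → ℂ) (f : X → ℂ) (x : X) : ℝ≥0∞ :=
  ⨆ (ε : ℝ) (_ : 0 < ε), ENNReal.ofReal ‖∫ y in (closedBall x ε)ᶜ, K x y * f y ∂μ‖

/-- `T` is an `L²(μ)`-bounded Calderón–Zygmund operator with kernel `K` and `L²` norm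
bound `CT`. -/
structure IsCZOperator (μ : Measure X) (K : X → X → ℂ) (T : (X → ℂ) → X → ℂ) (CT : ℝ) :
    Prop where
  map_add : ∀ f g, MemLp f 2 μ → MemLp g 2 μ → T (f + g) = T f + T g
  map_smul : ∀ (c : ℂ) (f), MemLp f 2 μ → T (c • f) = c • T f
  norm_bound : ∀ f, MemLp f 2 μ → eLpNorm (T f) 2 μ ≤ ENNReal.ofReal CT * eLpNorm f 2 μ
  rep : ∀ f : X → ℂ, (∃ M, ∀ x, ‖f x‖ ≤ M) → Bornology.IsBounded (Function.support f) →
    ∀ x, x ∉ tsupport f → T f x = ∫ y, K x y * f y ∂μ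

/-- A David–Mattila lattice with parameters `C0, A0` associated to `μ`:
for each generation `k` a Borel partition `cells k` of `supp μ`, each cell `Q` carrying a
ball `B(Q) = B(center k Q, radius k Q)`. -/
structure DavidMattila (μ : Measure X) (C0 A0 : ℝ) where
  cells : ℕ → Set (Set X)
  center : ℕ → Set X → X
  radius : ℕ → Set X → ℝ
  measurable : ∀ k, ∀ Q ∈ cells k, MeasurableSet Q
  cover : ∀ k, ⋃₀ cells k = msupport μ
  pairwise_disjoint : ∀ k, ∀ Q ∈ cells k, ∀ R ∈ cells k, Q ≠ R → Disjoint Q R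
  nested : ∀ k l, k < l → ∀ Q ∈ cells l, ∀ R ∈ cells k, Q ⊆ R ∨ Disjoint Q R
  center_mem : ∀ k, ∀ Q ∈ cells k, center k Q ∈ msupport μ
  radius_lb : ∀ k, ∀ Q ∈ cells k, A0 ^ (-(k : ℤ)) ≤ radius k Q
  radius_ub : ∀ k, ∀ Q ∈ cells k, radius k Q ≤ C0 * A0 ^ (-(k : ℤ))
  ball_subset : ∀ k, ∀ Q ∈ cells k, msupport μ ∩ ball (center k Q) (radius k Q) ⊆ Q
  subset_ball : ∀ k, ∀ Q ∈ cells k, Q ⊆ msupport μ ∩ ball (center k Q) (28 * radius k Q)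
  disjoint_five : ∀ k, ∀ Q ∈ cells k, ∀ R ∈ cells k, Q ≠ R →
    Disjoint (ball (center k Q) (5 * radius k Q)) (ball (center k R) (5 * radius k R))
  nondoubling : ∀ k, ∀ Q ∈ cells k,
    ENNReal.ofReal C0 * μ (ball (center k Q) (radius k Q)) <
        μ (ball (center k Q) (100 * radius k Q)) →
      radius k Q = A0 ^ (-(k : ℤ)) ∧
      ∀ c : ℝ, 1 ≤ c → c ≤ C0 →
        ENNReal.ofReal C0 * μ (ball (center k Q) (c * radius k Q)) ≤
          μ (ball (center k Q) (100 * c * radius k Q))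

/-- The average `A(f,Q) = μ(αB(Q))⁻¹ ∫_{30B(Q)} |f| dμ` attached to a ball `B(z,r)`. -/
noncomputable def cellAvg (μ : Measure X) (α : ℝ) (f : X → ℂ) (z : X) (r : ℝ) : ℝ≥0∞ :=
  (∫⁻ y in ball z (30 * r), ‖f y‖₊ ∂μ) / μ (ball z (α * r))

/-- `Θ(Q) = μ(αB(Q)) / λ(z_Q, α r(Q))`. -/
noncomputable def theta (μ : Measure X) (lam : X → ℝ → ℝ) (α : ℝ) (z : X) (r : ℝ) : ℝ≥0∞ :=
  μ (ball z (α * r)) / ENNReal.ofReal (lam z (α * r))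

/-- The maximal function `M_λ f(x) = sup_{R>0} λ(x,R)⁻¹ ∫_{B(x,R)} |f| dμ`. -/
noncomputable def Mlam (μ : Measure X) (lam : X → ℝ → ℝ) (f : X → ℂ) (x : X) : ℝ≥0∞ :=
  ⨆ (R : ℝ) (_ : 0 < R), (∫⁻ y in ball x R, ‖f y‖₊ ∂μ) / ENNReal.ofReal (lam x R)

/-- The localized grand maximal truncated operator `N_{Q₀}`. -/
noncomputable def grandMax (μ : Measure X) {C0 A0 : ℝ} (D : DavidMattila μ C0 A0)
    (K : X → X → ℂ) (Q0 : Set X) (f : X → ℂ) (x : X) : ℝ≥0∞ :=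
  Q0.indicator (fun x' =>
    ⨆ (k : ℕ) (P : Set X) (_ : P ∈ D.cells k) (_ : x' ∈ P) (_ : P ⊆ Q0) (y : X) (_ : y ∈ P),
      ENNReal.ofReal
        ‖∫ z in (ball (D.center k P) (30 * D.radius k P))ᶜ, K y z * f z ∂μ‖) x

/-- `∫_S w dμ` for a weight `w`. -/
noncomputable def wInt (μ : Measure X) (w : X → ℝ) (S : Set X) : ℝ≥0∞ :=
  ∫⁻ x in S, ENNReal.ofReal (w x) ∂μ

end

private lemma halving_iter {X : Type*} [MetricSpace X] [MeasurableSpace X] [BorelSpace X]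
    {μ : MeasureTheory.Measure X} {lam : X → ℝ → ℝ} {Cl : ℝ}
    (hud : IsUpperDoubling μ lam Cl) (x : X) :
    ∀ (n : ℕ) (r : ℝ), 0 < r → lam x r ≤ Cl ^ n * lam x (r / 2 ^ n) := by
  have hCl : (0:ℝ) < Cl := lt_trans one_pos hud.one_lt
  intro n
  induction n with
  | zero => intro r hr; simp
  | succ n ih =>
    intro r hr
    calc lam x r ≤ Cl ^ n * lam x (r / 2 ^ n) := ih r hr
    _ ≤ Cl ^ n * (Cl * lam x (r / 2 ^ n / 2)) := by
        exact mul_le_mul_of_nonneg_left (hud.halving x _ (by positivity)) (by positivity)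
    _ = Cl ^ (n+1) * lam x (r / 2 ^ (n+1)) := by
        rw [pow_succ (2:ℝ), ← div_div]; ring

private lemma key_lam_bound {X : Type*} [MetricSpace X] [MeasurableSpace X] [BorelSpace X]
    {μ : MeasureTheory.Measure X} {lam : X → ℝ → ℝ} {Cl : ℝ}
    (hud : IsUpperDoubling μ lam Cl) {α : ℝ} (hα : 200 ≤ α) (m : ℕ)
    (x z : X) (r R : ℝ) (hr : 0 < r) (hR : 0 < R)
    (hdist : dist x z ≤ 28 * r) (hrR : α * r ≤ 2 ^ m * R) :
    lam z (α * r) ≤ Cl ^ (m + 1) * lam x R := by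
  have hCl : (0:ℝ) < Cl := lt_trans one_pos hud.one_lt
  have hαr : 0 < α * r := by nlinarith
  have h1 : lam z (α * r) ≤ Cl * lam x (α * r) := by
    refine hud.close z x (α * r) hαr ?_
    rw [dist_comm]
    nlinarith
  have h2 : lam x (α * r) ≤ Cl ^ m * lam x (α * r / 2 ^ m) :=
    halving_iter hud x m (α * r) hαr
  have h3 : lam x (α * r / 2 ^ m) ≤ lam x R := by
    refine hud.lam_mono x _ _ (by positivity) ?_
    rw [div_le_iff₀ (by positivity)]
    nlinarith [pow_pos (two_pos (α := ℝ)) m]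
  calc lam z (α * r) ≤ Cl * lam x (α * r) := h1
  _ ≤ Cl * (Cl ^ m * lam x (α * r / 2 ^ m)) := by
      exact mul_le_mul_of_nonneg_left h2 hCl.le
  _ ≤ Cl * (Cl ^ m * lam x R) := by
      refine mul_le_mul_of_nonneg_left (mul_le_mul_of_nonneg_left h3 (by positivity)) hCl.le
  _ = Cl ^ (m + 1) * lam x R := by ring


open MeasureTheory Metric Set ENNReal in
/-- Pointwise domination of `M_λ f` by the sup of `Θ(Q) A(f,Q)` over David–Mattila
cells containing the point, for `f` supported on `30B(Q₀)` with `Q₀` a top generation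
cell. -/
theorem Mlam_dominated_by_cell_sup
    {X : Type*} [MetricSpace X] [MeasurableSpace X] [BorelSpace X]
    (μ : Measure X) [IsLocallyFiniteMeasure μ]
    (lam : X → ℝ → ℝ) (Cl : ℝ) (hud : IsUpperDoubling μ lam Cl)
    (C0 A0 : ℝ) (hC0 : 1 < C0) (hA0 : 5000 * C0 < A0)
    (D : DavidMattila μ C0 A0)
    (α : ℝ) (hα : 200 ≤ α) :
    ∃ C : ℝ, 0 < C ∧
      ∀ Q₀ ∈ D.cells 0,
        ∀ f : X → ℂ, Integrable f μ →
          Function.support f ⊆ ball (D.center 0 Q₀) (30 * D.radius 0 Q₀) →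
          ∀ x ∈ Q₀,
            Mlam μ lam f x ≤ ENNReal.ofReal C *
              ⨆ (k : ℕ) (Q : Set X) (_ : Q ∈ D.cells k) (_ : x ∈ Q),
                theta μ lam α (D.center k Q) (D.radius k Q) *
                  cellAvg μ α f (D.center k Q) (D.radius k Q) := by
  classical
  have hCl : (0:ℝ) < Cl := lt_trans one_pos hud.one_lt
  have hC0pos : (0:ℝ) < C0 := lt_trans one_pos hC0
  have hA1 : (1:ℝ) < A0 := by nlinarith
  have hA0pos : (0:ℝ) < A0 := lt_trans one_pos hA1
  have hαpos : (0:ℝ) < α := by linarith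
  obtain ⟨m, hm⟩ := pow_unbounded_of_one_lt (α * C0 * A0) (one_lt_two (α := ℝ))
  refine ⟨Cl ^ (m + 1), by positivity, ?_⟩
  intro Q₀ hQ₀ f hf hsupp x hx
  set S := ⨆ (k : ℕ) (Q : Set X) (_ : Q ∈ D.cells k) (_ : x ∈ Q),
      theta μ lam α (D.center k Q) (D.radius k Q) *
        cellAvg μ α f (D.center k Q) (D.radius k Q) with hS
  rw [Mlam]
  refine iSup₂_le fun R hR => ?_
  -- find a good cell
  obtain ⟨k, Q, hQ, hxQ, hIle, hrad⟩ :
      ∃ (k : ℕ) (Q : Set X), Q ∈ D.cells k ∧ x ∈ Q ∧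
        (∫⁻ y in ball x R, ‖f y‖₊ ∂μ) ≤
          (∫⁻ y in ball (D.center k Q) (30 * D.radius k Q), ‖f y‖₊ ∂μ) ∧
        α * D.radius k Q ≤ 2 ^ m * R := by
    by_cases h2R : 2 ≤ R
    · -- use Q₀
      refine ⟨0, Q₀, hQ₀, hx, ?_, ?_⟩
      · set t := ball (D.center 0 Q₀) (30 * D.radius 0 Q₀) with ht
        have hg : ∀ y, ((‖f y‖₊ : ℝ≥0∞)) = t.indicator (fun y => ((‖f y‖₊ : ℝ≥0∞))) y := by
          intro y
          by_cases hy : y ∈ t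
          · rw [Set.indicator_of_mem hy]
          · rw [Set.indicator_of_notMem hy]
            have : f y = 0 := by
              by_contra hc
              exact hy (hsupp hc)
            simp [this]
        calc (∫⁻ y in ball x R, ‖f y‖₊ ∂μ)
            = ∫⁻ y in ball x R, t.indicator (fun y => ((‖f y‖₊ : ℝ≥0∞))) y ∂μ := by
              exact lintegral_congr fun y => hg y
        _ ≤ ∫⁻ y, t.indicator (fun y => ((‖f y‖₊ : ℝ≥0∞))) y ∂μ :=
              setLIntegral_le_lintegral _ _
        _ = ∫⁻ y in t, ‖f y‖₊ ∂μ := lintegral_indicator measurableSet_ball _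
      · have hub := D.radius_ub 0 Q₀ hQ₀
        simp only [Nat.cast_zero, neg_zero, zpow_zero, mul_one] at hub
        have h1 : α * D.radius 0 Q₀ ≤ α * C0 := mul_le_mul_of_nonneg_left hub hαpos.le
        have h2 : α * C0 ≤ α * C0 * A0 := by nlinarith [mul_pos hαpos hC0pos]
        have h3 : (2:ℝ) ^ m ≤ 2 ^ m * R := by nlinarith [pow_pos (two_pos (α := ℝ)) m]
        linarith
    · push_neg at h2R
      -- choose scale
      have hex : ∃ n : ℕ, A0 ^ (-((n:ℤ) + 1)) < R / 2 := by
        obtain ⟨n, hn⟩ := pow_unbounded_of_one_lt (2 / R) hA1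
        refine ⟨n, ?_⟩
        have h1 : (2:ℝ) / R < A0 ^ (n + 1) := lt_of_lt_of_le hn
          (pow_le_pow_right₀ hA1.le (Nat.le_succ n))
        have h2 : (A0 ^ (n + 1))⁻¹ < (2 / R)⁻¹ := by
          exact inv_strictAnti₀ (by positivity) h1
        rw [inv_div] at h2
        have : A0 ^ (-((n:ℤ) + 1)) = (A0 ^ (n + 1))⁻¹ := by
          rw [← zpow_natCast A0 (n+1), ← zpow_neg]
          norm_num
        rw [this]
        linarith
      set k := Nat.find hex with hk
      have hk1 : A0 ^ (-((k:ℤ) + 1)) < R / 2 := Nat.find_spec hex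
      have hk2 : R / 2 ≤ A0 ^ (-(k:ℤ)) := by
        rcases Nat.eq_zero_or_pos k with h0 | hpos
        · rw [h0]; norm_num; linarith
        · obtain ⟨j, hj⟩ := Nat.exists_eq_succ_of_ne_zero hpos.ne'
          have := Nat.find_min hex (m := j) (by omega)
          push_neg at this
          have hcast : -((k:ℤ)) = -((j:ℤ) + 1) := by omega
          rw [hcast]
          exact this
      -- the cell of generation k containing x
      have hxW : x ∈ msupport μ := (D.subset_ball 0 Q₀ hQ₀ hx).1
      have hxW' : x ∈ ⋃₀ D.cells k := by rw [D.cover k]; exact hxW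
      obtain ⟨Q, hQ, hxQ⟩ := hxW'
      have hrlb : A0 ^ (-(k:ℤ)) ≤ D.radius k Q := D.radius_lb k Q hQ
      have hrub : D.radius k Q ≤ C0 * A0 ^ (-(k:ℤ)) := D.radius_ub k Q hQ
      have hzpow : A0 ^ (-(k:ℤ)) = A0 * A0 ^ (-((k:ℤ) + 1)) := by
        have h := zpow_add₀ (ne_of_gt hA0pos) 1 (-((k:ℤ) + 1))
        rw [show (1 + -((k:ℤ) + 1)) = -(k:ℤ) by ring, zpow_one] at h
        exact h
      have hrpos : 0 < D.radius k Q := lt_of_lt_of_le (by positivity) hrlb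
      have hdxz : dist x (D.center k Q) < 28 * D.radius k Q :=
        mem_ball.mp (D.subset_ball k Q hQ hxQ).2
      refine ⟨k, Q, hQ, hxQ, ?_, ?_⟩
      · refine lintegral_mono_set ?_
        intro y hy
        rw [mem_ball] at hy ⊢
        have := dist_triangle y x (D.center k Q)
        have hR2r : R ≤ 2 * D.radius k Q := by linarith
        linarith
      · have hzp : (0:ℝ) < A0 ^ (-((k:ℤ) + 1)) := by positivity
        have h2m : (1:ℝ) < 2 ^ m := by
          calc (1:ℝ) < α * C0 * A0 := by
                nlinarith [mul_pos hαpos hC0pos, mul_pos (mul_pos hαpos hC0pos) hA0pos]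
          _ < 2 ^ m := hm
        -- radius < C0 * A0 * (R/2)
        have hrub' : D.radius k Q ≤ C0 * (A0 * A0 ^ (-((k:ℤ) + 1))) := by
          rw [← hzpow]; exact hrub
        have ht : (0:ℝ) < A0 ^ (-((k:ℤ) + 1)) := hzp
        have e1 : α * D.radius k Q ≤ α * (C0 * (A0 * A0 ^ (-((k:ℤ) + 1)))) :=
          mul_le_mul_of_nonneg_left hrub' hαpos.le
        have e2 : α * (C0 * (A0 * A0 ^ (-((k:ℤ) + 1)))) = (α * C0 * A0) * A0 ^ (-((k:ℤ) + 1)) := by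
          ring
        have e3 : (α * C0 * A0) * A0 ^ (-((k:ℤ) + 1)) ≤ 2 ^ m * A0 ^ (-((k:ℤ) + 1)) :=
          mul_le_mul_of_nonneg_right hm.le ht.le
        have e4 : (2:ℝ) ^ m * A0 ^ (-((k:ℤ) + 1)) ≤ 2 ^ m * (R / 2) :=
          mul_le_mul_of_nonneg_left hk1.le (by positivity)
        have e5 : (2:ℝ) ^ m * (R / 2) ≤ 2 ^ m * R :=
          mul_le_mul_of_nonneg_left (by linarith) (by positivity)
        linarith
  -- common endgame
  set z := D.center k Q with hz
  set r := D.radius k Q with hr'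
  have hrpos : 0 < r := lt_of_lt_of_le (by positivity) (D.radius_lb k Q hQ)
  have hdxz : dist x z ≤ 28 * r := (mem_ball.mp (D.subset_ball k Q hQ hxQ).2).le
  have hαr : 0 < α * r := by positivity
  have hlam : lam z (α * r) ≤ Cl ^ (m + 1) * lam x R :=
    key_lam_bound hud hα m x z r R hrpos hR hdxz hrad
  have hLQpos : 0 < lam z (α * r) := hud.lam_pos z _ hαr
  have hLRpos : 0 < lam x R := hud.lam_pos x R hR
  have hm0 : μ (ball z (α * r)) ≠ 0 :=
    (D.center_mem k Q hQ (α * r) hαr).ne'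
  have hmtop : μ (ball z (α * r)) ≠ ⊤ :=
    (lt_of_le_of_lt (hud.measure_le z _ hαr) ofReal_lt_top).ne
  have hCne : ENNReal.ofReal (Cl ^ (m+1)) ≠ 0 := by
    simp [ENNReal.ofReal_eq_zero, not_le]
    positivity
  have hCtop : ENNReal.ofReal (Cl ^ (m+1)) ≠ ⊤ := ofReal_ne_top
  have hkey : theta μ lam α z r * cellAvg μ α f z r =
      (∫⁻ y in ball z (30 * r), ‖f y‖₊ ∂μ) / ENNReal.ofReal (lam z (α * r)) := by
    rw [theta, cellAvg, div_eq_mul_inv, div_eq_mul_inv, div_eq_mul_inv]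
    rw [show μ (ball z (α * r)) * (ENNReal.ofReal (lam z (α * r)))⁻¹ *
        ((∫⁻ y in ball z (30 * r), ‖f y‖₊ ∂μ) * (μ (ball z (α * r)))⁻¹) =
        (∫⁻ y in ball z (30 * r), ‖f y‖₊ ∂μ) * (ENNReal.ofReal (lam z (α * r)))⁻¹ *
        (μ (ball z (α * r)) * (μ (ball z (α * r)))⁻¹) by ring]
    rw [ENNReal.mul_inv_cancel hm0 hmtop, mul_one]
  have hLQle : ENNReal.ofReal (lam z (α * r)) ≤
      ENNReal.ofReal (Cl ^ (m+1)) * ENNReal.ofReal (lam x R) := by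
    rw [← ENNReal.ofReal_mul (by positivity)]
    exact ENNReal.ofReal_le_ofReal hlam
  calc (∫⁻ y in ball x R, ‖f y‖₊ ∂μ) / ENNReal.ofReal (lam x R)
      ≤ (∫⁻ y in ball z (30 * r), ‖f y‖₊ ∂μ) / ENNReal.ofReal (lam x R) :=
        ENNReal.div_le_div_right hIle _
  _ = (ENNReal.ofReal (Cl ^ (m+1)) * ∫⁻ y in ball z (30 * r), ‖f y‖₊ ∂μ) /
        (ENNReal.ofReal (Cl ^ (m+1)) * ENNReal.ofReal (lam x R)) :=
        (ENNReal.mul_div_mul_left _ _ hCne hCtop).symm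
  _ ≤ (ENNReal.ofReal (Cl ^ (m+1)) * ∫⁻ y in ball z (30 * r), ‖f y‖₊ ∂μ) /
        ENNReal.ofReal (lam z (α * r)) :=
        ENNReal.div_le_div le_rfl hLQle
  _ = ENNReal.ofReal (Cl ^ (m+1)) *
        ((∫⁻ y in ball z (30 * r), ‖f y‖₊ ∂μ) / ENNReal.ofReal (lam z (α * r))) :=
        mul_div_assoc _ _ _
  _ = ENNReal.ofReal (Cl ^ (m+1)) * (theta μ lam α z r * cellAvg μ α f z r) := by
        rw [hkey]
  _ ≤ ENNReal.ofReal (Cl ^ (m+1)) * S := by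
        refine mul_le_mul_right ?_ _
        rw [hS]
        exact le_iSup_of_le k (le_iSup_of_le Q (le_iSup_of_le hQ (le_iSup_of_le hxQ le_rfl)))
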